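/- Let L be a Lie algebra with a Frobenius group FH of automorphisms, F = ⟨φ⟩ cyclic of odd order n, H = ⟨h⟩ of order 2 with h φ h^{-1} = φ^{-1}, over a field containing a primitive n-th root of unity ω. Suppose the fixed-point subalgebra C_L(H) is metabelian. Let L_i denote the ω^i-eigenspace of φ. Then for any (-1)-independent sequence (d_1, d_2, d_3, d_4) in Z/nZ, [[L_{d_1}, L_{d_2}], [L_{d_3}, L_{d_4}]] = 0. -/

import Mathlib

def NegOneDependent {n k : ℕ} (a : Fin k → ZMod n) : Prop :=
  ∃ t : Fin k → Bool, (∃ i, t i = true) ∧ ∑ i, (if t i then a i else 0) = 0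

def NegOneIndependent {n k : ℕ} (a : Fin k → ZMod n) : Prop :=
  ¬ NegOneDependent a

theorem stmt_14 (K : Type) (L : Type) [Field K] [LieRing L] [LieAlgebra K L]
    (n : ℕ) (hpos : 0 < n) (hodd : Odd n)
    (ω : K) (hω : IsPrimitiveRoot ω n)
    (φ h : L ≃ₗ[K] L)
    (hφbr : ∀ x y : L, φ ⁅x, y⁆ = ⁅φ x, φ y⁆)
    (hhbr : ∀ x y : L, h ⁅x, y⁆ = ⁅h x, h y⁆)
    (hφn : orderOf φ = n) (hh2 : orderOf h = 2)
    (hrel : h * φ * h⁻¹ = φ⁻¹)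
    -- the fixed-point subalgebra of H is metabelian
    (hmeta : ∀ x₁ x₂ x₃ x₄ : L, h x₁ = x₁ → h x₂ = x₂ → h x₃ = x₃ → h x₄ = x₄ →
      ⁅⁅x₁, x₂⁆, ⁅x₃, x₄⁆⁆ = 0)
    (d : Fin 4 → ZMod n) (hind : NegOneIndependent d)
    (x₁ : L) (hx₁ : x₁ ∈ Module.End.eigenspace (φ : Module.End K L) (ω ^ (d 0).val))
    (x₂ : L) (hx₂ : x₂ ∈ Module.End.eigenspace (φ : Module.End K L) (ω ^ (d 1).val))
    (x₃ : L) (hx₃ : x₃ ∈ Module.End.eigenspace (φ : Module.End K L) (ω ^ (d 2).val))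
    (x₄ : L) (hx₄ : x₄ ∈ Module.End.eigenspace (φ : Module.End K L) (ω ^ (d 3).val)) :
    ⁅⁅x₁, x₂⁆, ⁅x₃, x₄⁆⁆ = 0 := by
  haveI : NeZero n := ⟨hpos.ne'⟩
  have hωne : ω ≠ 0 := hω.ne_zero hpos.ne'
  set α : Fin 4 → K := fun i => ω ^ (d i).val with hα
  have hαne : ∀ i, α i ≠ 0 := fun i => pow_ne_zero _ hωne
  -- eigenvector equations
  have hx1 : φ x₁ = α 0 • x₁ := Module.End.mem_eigenspace_iff.mp hx₁
  have hx2 : φ x₂ = α 1 • x₂ := Module.End.mem_eigenspace_iff.mp hx₂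
  have hx3 : φ x₃ = α 2 • x₃ := Module.End.mem_eigenspace_iff.mp hx₃
  have hx4 : φ x₄ = α 3 • x₄ := Module.End.mem_eigenspace_iff.mp hx₄
  -- h is an involution
  have hh : ∀ x : L, h (h x) = x := by
    intro x
    have : h ^ 2 = 1 := by rw [← hh2]; exact pow_orderOf_eq_one h
    have := congrArg (fun f : L ≃ₗ[K] L => f x) this
    simpa [pow_two] using this
  -- φ ∘ h = h ∘ φ⁻¹
  have hhh : h * h = 1 := by rw [← sq, ← hh2]; exact pow_orderOf_eq_one h
  have hinvh : h⁻¹ = h := inv_eq_iff_mul_eq_one.mpr hhh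
  have hcomm : ∀ x : L, φ (h x) = h (φ⁻¹ x) := by
    intro x
    have h2 : φ * h = h * φ⁻¹ := by
      rw [← hrel, hinvh]
      calc φ * h = (h * h) * (φ * h) := by rw [hhh, one_mul]
        _ = h * (h * φ * h) := by rw [mul_assoc h h (φ * h), ← mul_assoc h φ h]
    have := congrArg (fun f : L ≃ₗ[K] L => f x) h2
    simpa using this
  -- h maps a μ-eigenvector to a μ⁻¹-eigenvector
  have hflip : ∀ (x : L) (μ : K), μ ≠ 0 → φ x = μ • x → φ (h x) = μ⁻¹ • h x := by
    intro x μ hμ hx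
    have hinv : φ⁻¹ x = μ⁻¹ • x := by
      have h1 : φ (μ⁻¹ • x) = x := by
        rw [map_smul, hx, smul_smul, inv_mul_cancel₀ hμ, one_smul]
      calc φ⁻¹ x = φ⁻¹ (φ (μ⁻¹ • x)) := by rw [h1]
        _ = μ⁻¹ • x := φ.symm_apply_apply _
    rw [hcomm, hinv, map_smul]
  -- bracket of eigenvectors
  have hbr : ∀ (a b : L) (μ ν : K), φ a = μ • a → φ b = ν • b →
      φ ⁅a, b⁆ = (μ * ν) • ⁅a, b⁆ := by
    intro a b μ ν ha hb
    rw [hφbr, ha, hb, smul_lie, lie_smul, smul_smul]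
  -- abbreviations
  set ev : K → Submodule K L := fun μ => Module.End.eigenspace (φ : Module.End K L) μ with hev
  have hmem : ∀ (μ : K) (x : L), φ x = μ • x → x ∈ ev μ := by
    intro μ x hx
    exact Module.End.mem_eigenspace_iff.mpr hx
  set c₀ : K := α 0 * α 1 * (α 2 * α 3) with hc₀
  set N : Submodule K L := ⨆ (μ : K) (_ : μ ≠ c₀), ev μ with hN
  -- β
  set β : Bool → Fin 4 → K := fun b i => cond b (α i)⁻¹ (α i) with hβ
  -- the eigenvalue of a flipped term differs from c₀
  have hne : ∀ t1 t2 t3 t4 : Bool, (t1 || t2 || t3 || t4) = true →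
      β t1 0 * β t2 1 * (β t3 2 * β t4 3) ≠ c₀ := by
    intro t1 t2 t3 t4 hor heq
    set v : Fin 4 → ℤ := fun i => ((d i).val : ℤ) with hv
    set e : Fin 4 → ℤ := fun i => cond (![t1,t2,t3,t4] i) (-(v i)) (v i) with he
    have hβz : ∀ (b : Bool) (i : Fin 4), β b i = ω ^ (cond b (-(v i)) (v i)) := by
      intro b i
      cases b
      · simp only [hβ, hα, hv, cond_false]
        exact (zpow_natCast ω _).symm
      · simp only [hβ, hα, hv, cond_true, zpow_neg, zpow_natCast]
    have heq' : ω ^ (e 0 + e 1 + (e 2 + e 3)) = ω ^ (v 0 + v 1 + (v 2 + v 3)) := by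
      rw [zpow_add₀ hωne, zpow_add₀ hωne, zpow_add₀ hωne,
          zpow_add₀ hωne, zpow_add₀ hωne, zpow_add₀ hωne]
      calc ω ^ e 0 * ω ^ e 1 * (ω ^ e 2 * ω ^ e 3)
          = β t1 0 * β t2 1 * (β t3 2 * β t4 3) := by
            rw [hβz t1 0, hβz t2 1, hβz t3 2, hβz t4 3]; rfl
        _ = c₀ := heq
        _ = ω ^ v 0 * ω ^ v 1 * (ω ^ v 2 * ω ^ v 3) := by
            simp only [hc₀, hα, hv, zpow_natCast]
    have hdvd : (n : ℤ) ∣ (v 0 + v 1 + (v 2 + v 3)) - (e 0 + e 1 + (e 2 + e 3)) := by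
      rw [← hω.zpow_eq_one_iff_dvd, zpow_sub₀ hωne, heq', div_self (zpow_ne_zero _ hωne)]
    have hsum : (v 0 + v 1 + (v 2 + v 3)) - (e 0 + e 1 + (e 2 + e 3)) =
        2 * ((cond t1 (v 0) 0) + (cond t2 (v 1) 0) + ((cond t3 (v 2) 0) + (cond t4 (v 3) 0))) := by
      simp only [he]
      cases t1 <;> cases t2 <;> cases t3 <;> cases t4 <;> simp [Matrix.cons_val_zero,
        Matrix.cons_val_one, Matrix.head_cons] <;> ring
    rw [hsum] at hdvd
    have hcop : IsCoprime (n : ℤ) 2 := by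
      have h2 : Prime (2 : ℤ) := Int.prime_two
      have : ¬ (2 : ℤ) ∣ (n : ℤ) := by
        intro hd
        have : (2 : ℕ) ∣ n := by exact_mod_cast hd
        exact (Nat.not_even_iff_odd.mpr hodd) (even_iff_two_dvd.mpr this)
      exact ((h2.coprime_iff_not_dvd).mpr this).symm
    have hdvd' : (n : ℤ) ∣ (cond t1 (v 0) 0) + (cond t2 (v 1) 0) +
        ((cond t3 (v 2) 0) + (cond t4 (v 3) 0)) := hcop.dvd_of_dvd_mul_left hdvd
    -- build NegOneDependent
    apply hind
    refine ⟨![t1,t2,t3,t4], ?_, ?_⟩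
    · have : t1 = true ∨ t2 = true ∨ t3 = true ∨ t4 = true := by
        revert hor; cases t1 <;> cases t2 <;> cases t3 <;> cases t4 <;> simp
      rcases this with h|h|h|h
      exacts [⟨0, h⟩, ⟨1, h⟩, ⟨2, h⟩, ⟨3, h⟩]
    · have hz : (((cond t1 (v 0) 0) + (cond t2 (v 1) 0) +
          ((cond t3 (v 2) 0) + (cond t4 (v 3) 0)) : ℤ) : ZMod n) = 0 :=
        (ZMod.intCast_zmod_eq_zero_iff_dvd _ n).mpr hdvd'
      have hcomp : ∀ (b : Bool) (i : Fin 4),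
          (if b then d i else 0) = ((cond b (v i) 0 : ℤ) : ZMod n) := by
        intro b i
        cases b
        · simp
        · simp only [if_pos, cond]
          rw [hv]
          push_cast
          rw [ZMod.natCast_val, ZMod.cast_id]
      rw [Fin.sum_univ_four]
      simp only [Matrix.cons_val_zero, Matrix.cons_val_one, Matrix.head_cons,
        Matrix.cons_val_two, Matrix.tail_cons, Matrix.cons_val_three]
      erw [hcomp t1 0, hcomp t2 1, hcomp t3 2, hcomp t4 3]
      push_cast at hz ⊢
      linear_combination hz
  -- a flipped term lies in N
  have hterm : ∀ (t1 t2 t3 t4 : Bool) (z1 z2 z3 z4 : L),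
      (t1 || t2 || t3 || t4) = true →
      φ z1 = β t1 0 • z1 → φ z2 = β t2 1 • z2 →
      φ z3 = β t3 2 • z3 → φ z4 = β t4 3 • z4 →
      ⁅⁅z1, z2⁆, ⁅z3, z4⁆⁆ ∈ N := by
    intro t1 t2 t3 t4 z1 z2 z3 z4 hor h1 h2 h3 h4
    have hb : φ ⁅⁅z1, z2⁆, ⁅z3, z4⁆⁆ =
        (β t1 0 * β t2 1 * (β t3 2 * β t4 3)) • ⁅⁅z1, z2⁆, ⁅z3, z4⁆⁆ :=
      hbr _ _ _ _ (hbr _ _ _ _ h1 h2) (hbr _ _ _ _ h3 h4)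
    have hle : ev (β t1 0 * β t2 1 * (β t3 2 * β t4 3)) ≤ N :=
      le_iSup₂ (f := fun (μ : K) (_ : μ ≠ c₀) => ev μ) _ (hne t1 t2 t3 t4 hor)
    exact hle (hmem _ _ hb)
  -- h-images eigen equations; note β true i = (α i)⁻¹ and β false i = α i definitionally
  have hy1 : φ (h x₁) = β true 0 • h x₁ := hflip _ _ (hαne 0) hx1
  have hy2 : φ (h x₂) = β true 1 • h x₂ := hflip _ _ (hαne 1) hx2
  have hy3 : φ (h x₃) = β true 2 • h x₃ := hflip _ _ (hαne 2) hx3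
  have hy4 : φ (h x₄) = β true 3 • h x₄ := hflip _ _ (hαne 3) hx4
  have hx1' : φ x₁ = β false 0 • x₁ := hx1
  have hx2' : φ x₂ = β false 1 • x₂ := hx2
  have hx3' : φ x₃ = β false 2 • x₃ := hx3
  have hx4' : φ x₄ = β false 3 • x₄ := hx4
  -- the metabelian identity for the symmetrized elements
  have hfix : ∀ x : L, h (x + h x) = x + h x := by
    intro x; rw [map_add, hh, add_comm]
  have hzero : ⁅⁅x₁ + h x₁, x₂ + h x₂⁆, ⁅x₃ + h x₃, x₄ + h x₄⁆⁆ = 0 :=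
    hmeta _ _ _ _ (hfix x₁) (hfix x₂) (hfix x₃) (hfix x₄)
  simp only [lie_add, add_lie] at hzero
  set R : L :=
      ⁅⁅x₁, x₂⁆, ⁅x₃, h x₄⁆⁆ +
      ⁅⁅x₁, x₂⁆, ⁅h x₃, x₄⁆⁆ +
      ⁅⁅x₁, x₂⁆, ⁅h x₃, h x₄⁆⁆ +
      ⁅⁅x₁, h x₂⁆, ⁅x₃, x₄⁆⁆ +
      ⁅⁅x₁, h x₂⁆, ⁅x₃, h x₄⁆⁆ +
      ⁅⁅x₁, h x₂⁆, ⁅h x₃, x₄⁆⁆ +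
      ⁅⁅x₁, h x₂⁆, ⁅h x₃, h x₄⁆⁆ +
      ⁅⁅h x₁, x₂⁆, ⁅x₃, x₄⁆⁆ +
      ⁅⁅h x₁, x₂⁆, ⁅x₃, h x₄⁆⁆ +
      ⁅⁅h x₁, x₂⁆, ⁅h x₃, x₄⁆⁆ +
      ⁅⁅h x₁, x₂⁆, ⁅h x₃, h x₄⁆⁆ +
      ⁅⁅h x₁, h x₂⁆, ⁅x₃, x₄⁆⁆ +
      ⁅⁅h x₁, h x₂⁆, ⁅x₃, h x₄⁆⁆ +
      ⁅⁅h x₁, h x₂⁆, ⁅h x₃, x₄⁆⁆ +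
      ⁅⁅h x₁, h x₂⁆, ⁅h x₃, h x₄⁆⁆ with hR
  have hsum : ⁅⁅x₁, x₂⁆, ⁅x₃, x₄⁆⁆ + R = 0 := by
    rw [← hzero, hR]
    abel
  have hRmem : R ∈ N := by
    rw [hR]
    refine add_mem ?_ (hterm true true true true _ _ _ _ rfl hy1 hy2 hy3 hy4)
    refine add_mem ?_ (hterm true true true false _ _ _ _ rfl hy1 hy2 hy3 hx4')
    refine add_mem ?_ (hterm true true false true _ _ _ _ rfl hy1 hy2 hx3' hy4)
    refine add_mem ?_ (hterm true true false false _ _ _ _ rfl hy1 hy2 hx3' hx4')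
    refine add_mem ?_ (hterm true false true true _ _ _ _ rfl hy1 hx2' hy3 hy4)
    refine add_mem ?_ (hterm true false true false _ _ _ _ rfl hy1 hx2' hy3 hx4')
    refine add_mem ?_ (hterm true false false true _ _ _ _ rfl hy1 hx2' hx3' hy4)
    refine add_mem ?_ (hterm true false false false _ _ _ _ rfl hy1 hx2' hx3' hx4')
    refine add_mem ?_ (hterm false true true true _ _ _ _ rfl hx1' hy2 hy3 hy4)
    refine add_mem ?_ (hterm false true true false _ _ _ _ rfl hx1' hy2 hy3 hx4')
    refine add_mem ?_ (hterm false true false true _ _ _ _ rfl hx1' hy2 hx3' hy4)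
    refine add_mem ?_ (hterm false true false false _ _ _ _ rfl hx1' hy2 hx3' hx4')
    refine add_mem ?_ (hterm false false true true _ _ _ _ rfl hx1' hx2' hy3 hy4)
    refine add_mem ?_ (hterm false false true false _ _ _ _ rfl hx1' hx2' hy3 hx4')
    exact hterm false false false true _ _ _ _ rfl hx1' hx2' hx3' hy4
  have hT : ⁅⁅x₁, x₂⁆, ⁅x₃, x₄⁆⁆ = -R := eq_neg_of_add_eq_zero_left hsum
  have hTN : ⁅⁅x₁, x₂⁆, ⁅x₃, x₄⁆⁆ ∈ N := by rw [hT]; exact neg_mem hRmem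
  have hTev : ⁅⁅x₁, x₂⁆, ⁅x₃, x₄⁆⁆ ∈ ev c₀ :=
    hmem _ _ (hbr _ _ _ _ (hbr _ _ _ _ hx1 hx2) (hbr _ _ _ _ hx3 hx4))
  have hdisj : Disjoint (ev c₀) N :=
    (Module.End.eigenspaces_iSupIndep (φ : Module.End K L)) c₀
  exact (Submodule.disjoint_def.mp hdisj) _ hTev hTN
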